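/- Under the hypotheses above (φ : G' → G surjective with central kernel K, intertwined automorphisms σ', σ, Lang map surjective on G'), the image φ(Fix(σ')) is a normal subgroup of Fix(σ). -/

import Mathlib

/-- The subgroup of fixed points of a group endomorphism. -/
def fixedSubgroup {G : Type*} [Group G] (σ : G →* G) : Subgroup G where
  carrier := {x | σ x = x}
  one_mem' := map_one σ
  mul_mem' := by
    intro a b ha hb
    simp only [Set.mem_setOf_eq, map_mul] at *
    rw [ha, hb]
  inv_mem' := by
    intro a ha
    simp only [Set.mem_setOf_eq, map_inv] at *
    rw [ha]

theorem image_of_fixed_points_normal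
    {G' G : Type*} [Group G'] [Group G] (φ : G' →* G)
    (hsurj : Function.Surjective φ) (hcentral : φ.ker ≤ Subgroup.center G')
    (σ' : G' ≃* G') (σ : G ≃* G)
    (hcomm : ∀ y : G', φ (σ' y) = σ (φ y))
    (hlang : ∀ g : G', ∃ y : G', y⁻¹ * σ' y = g) :
    (fixedSubgroup σ'.toMonoidHom).map φ ≤ fixedSubgroup σ.toMonoidHom ∧
    (((fixedSubgroup σ'.toMonoidHom).map φ).subgroupOf
        (fixedSubgroup σ.toMonoidHom)).Normal := by
  constructor
  · rintro x ⟨h, hh, rfl⟩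
    show σ (φ h) = φ h
    have hh' : σ' h = h := hh
    rw [← hcomm, hh']
  · constructor
    rintro ⟨n, hn⟩ hmem ⟨g, hg⟩
    rw [Subgroup.mem_subgroupOf] at hmem ⊢
    obtain ⟨h, hh, rfl⟩ := hmem
    replace hh : σ' h = h := hh
    obtain ⟨y, rfl⟩ := hsurj g
    have hk : y⁻¹ * σ' y ∈ φ.ker := by
      have : σ (φ y) = φ y := hg
      simp [MonoidHom.mem_ker, hcomm, this]
    have hkc := Subgroup.mem_center_iff.mp (hcentral hk)
    have hfix : σ'.toMonoidHom (y * h * y⁻¹) = y * h * y⁻¹ := by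
      set k := y⁻¹ * σ' y with hkdef
      have hy : σ' y = y * k := by rw [hkdef]; group
      show σ' (y * h * y⁻¹) = y * h * y⁻¹
      rw [map_mul, map_mul, map_inv, hy, hh]
      have hc : h * k = k * h := hkc h
      calc y * k * h * (y * k)⁻¹ = y * (k * h * k⁻¹) * y⁻¹ := by group
        _ = y * (h * k * k⁻¹) * y⁻¹ := by rw [hc]
        _ = y * h * y⁻¹ := by group
    refine ⟨y * h * y⁻¹, hfix, ?_⟩
    simp [map_mul]
    rfl
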